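/- arXiv:2205.06875 — 2 statements merged into one kernel-verified Lean document; each statement's English description precedes it below -/
import Mathlib

section
/- Let 𝓕 be a forest on S, let y = ∏_{T ∈ 𝓕} y_T^{n_T} be a monomial in ℤ_𝓕, and let x = q_𝓕(y) ∈ R_𝓕. Then x = 0 if and only if y ∉ N[𝓕]. Moreover, if y ∈ N[𝓕], the set 𝓥 = {T ∈ 𝓕 : n_T ≥ 1} has a largest element T (i.e., 𝓥 is a T-tree), and Σ_{U ∈ 𝓥} n_U = |T| − 2, then x = x_T^{|T|−2}. -/
variable {α : Type*} [DecidableEq α]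

/-- The set of elements of `L` that are maximal in `L` under `T`. -/
def maxUnder (L : Finset (Finset α)) (T : Finset α) : Finset (Finset α) :=
  L.filter fun U => U ⊂ T ∧ ∀ V ∈ L, ¬ (U ⊂ V ∧ V ⊂ T)

/-- A forest on `S`. -/
def IsForest (S : Finset α) (F : Finset (Finset α)) : Prop :=
  (∀ T ∈ F, T ⊆ S) ∧ (∀ T ∈ F, 2 ≤ T.card) ∧
    ∀ U ∈ F, ∀ T ∈ F, U ⊆ T ∨ T ⊆ U ∨ U ∩ T = ∅

noncomputable section

/-- The generator of `J_F` attached to `T ∈ F` and a set `Us` of pairwise disjoint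
proper subsets of `T`. -/
def relJ (F : Finset (Finset α)) (T : ↥F) (Us : Finset ↥F) : MvPolynomial ↥F ℤ :=
  MvPolynomial.X T ^ (T.1.card - 1 - ∑ U ∈ Us, (U.1.card - 1)) *
    ∏ U ∈ Us, (MvPolynomial.X T - MvPolynomial.X U)

/-- The ideal `J_F ⊆ ℤ_F`. -/
def idealJ (F : Finset (Finset α)) : Ideal (MvPolynomial ↥F ℤ) :=
  Ideal.span {P | ∃ (T : ↥F) (Us : Finset ↥F),
    (∀ U ∈ Us, U.1 ⊂ T.1) ∧
    (∀ U ∈ Us, ∀ V ∈ Us, U ≠ V → U.1 ∩ V.1 = ∅) ∧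
    P = relJ F T Us}


set_option linter.unusedSectionVars false
set_option maxHeartbeats 1000000

namespace Stmt16

variable (F : Finset (Finset α))

def degF (T : ↥F) (k : ↥F → ℕ) : ℕ :=
  ∑ U ∈ Finset.univ.filter (fun U : ↥F => U.1 ⊆ T.1), k U

/-- the condition of being in N[F] -/
def NpF (k : ↥F → ℕ) : Prop := ∀ T : ↥F, degF F T k ≤ T.1.card - 2

instance : DecidablePred (NpF F) := fun _ => Fintype.decidableForallFintype

def toFs (k : ↥F → ℕ) : ↥F →₀ ℕ := Finsupp.equivFunOnFinite.symm k

@[simp] lemma coe_toFs (k : ↥F → ℕ) : ⇑(toFs F k) = k := rfl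

lemma toFs_add (k l : ↥F → ℕ) : toFs F k + toFs F l = toFs F (fun W => k W + l W) := by
  ext W
  simp [Finsupp.add_apply]

def Mk (k : ↥F → ℕ) : MvPolynomial ↥F ℤ := MvPolynomial.monomial (toFs F k) 1

lemma Mk_mul (k l : ↥F → ℕ) : Mk F k * Mk F l = Mk F (fun W => k W + l W) := by
  rw [Mk, Mk, Mk, MvPolynomial.monomial_mul, one_mul, toFs_add]

lemma Mk_zero : Mk F (fun _ => 0) = 1 := by
  have h : toFs F (fun _ => 0) = 0 := by ext W; rfl
  rw [Mk, h]
  simp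

lemma Mk_X_pow (T : ↥F) (e : ℕ) :
    (MvPolynomial.X T : MvPolynomial ↥F ℤ) ^ e = Mk F (fun W => if W = T then e else 0) := by
  rw [MvPolynomial.X_pow_eq_monomial, Mk]
  have h : (Finsupp.single T e) = toFs F (fun W => if W = T then e else 0) := by
    ext W
    simp [Finsupp.single_apply, toFs, Finsupp.equivFunOnFinite, eq_comm]
    rfl
  rw [h]

lemma Mk_X (T : ↥F) :
    (MvPolynomial.X T : MvPolynomial ↥F ℤ) = Mk F (fun W => if W = T then 1 else 0) := by
  rw [← pow_one (MvPolynomial.X T), Mk_X_pow]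

lemma Mk_prod_X (A : Finset ↥F) :
    (∏ U ∈ A, (MvPolynomial.X U : MvPolynomial ↥F ℤ))
      = Mk F (fun W => if W ∈ A then 1 else 0) := by
  classical
  induction A using Finset.induction_on with
  | empty => simpa using (Mk_zero F).symm
  | @insert a s ha ih =>
    rw [Finset.prod_insert ha, ih, Mk_X, Mk_mul]
    congr 1
    ext W
    by_cases hW : W = a
    · subst hW; simp [ha]
    · simp [hW, Finset.mem_insert]

/-- generic shifted monomial exponent -/
def hmon (g : ↥F → ℕ) (T : ↥F) (A : Finset ↥F) (e : ℕ) : ↥F → ℕ :=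
  fun W => g W + (if W = T then e else 0) + (if W ∈ A then 1 else 0)

lemma Mk_hmon (g : ↥F → ℕ) (T : ↥F) (A : Finset ↥F) (e : ℕ) :
    Mk F (hmon F g T A e) = Mk F g * MvPolynomial.X T ^ e * ∏ U ∈ A, MvPolynomial.X U := by
  rw [Mk_X_pow, Mk_prod_X, Mk_mul, Mk_mul]
  rfl

lemma Mk_prod_pow (n : ↥F → ℕ) :
    (∏ T : ↥F, (MvPolynomial.X T : MvPolynomial ↥F ℤ) ^ n T) = Mk F n := by
  classical
  have h : ∀ s : Finset ↥F, (∏ T ∈ s, (MvPolynomial.X T : MvPolynomial ↥F ℤ) ^ n T)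
      = Mk F (fun W => if W ∈ s then n W else 0) := by
    intro s
    induction s using Finset.induction_on with
    | empty => simpa using (Mk_zero F).symm
    | @insert a s ha ih =>
      rw [Finset.prod_insert ha, ih, Mk_X_pow, Mk_mul]
      congr 1
      ext W
      by_cases hW : W = a
      · subst hW; simp [ha]
      · simp [hW, Finset.mem_insert]
  rw [h Finset.univ]
  congr 1
  ext W
  simp


def OmF (k : ↥F → ℕ) : ℕ := ∑ U : ↥F, k U * U.1.card

lemma deg_hmon (g : ↥F → ℕ) (T T' : ↥F) (A : Finset ↥F) (e : ℕ) :
    degF F T' (hmon F g T A e) = degF F T' g + (if T.1 ⊆ T'.1 then e else 0)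
      + (A.filter (fun U => U.1 ⊆ T'.1)).card := by
  unfold degF hmon
  rw [Finset.sum_add_distrib, Finset.sum_add_distrib]
  congr 1
  · congr 1
    rw [Finset.sum_ite_eq' (Finset.univ.filter (fun U : ↥F => U.1 ⊆ T'.1)) T (fun _ => e)]
    simp
  · rw [Finset.card_filter, Finset.sum_filter]
    have h3 : (∑ i ∈ A, if (i:↥F).1 ⊆ T'.1 then (1:ℕ) else 0)
        = ∑ i : ↥F, if i ∈ A then (if i.1 ⊆ T'.1 then 1 else 0) else 0 := by
      rw [Finset.sum_ite_mem, Finset.univ_inter]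
    rw [h3]
    apply Finset.sum_congr rfl
    intro U _
    by_cases h1 : U.1 ⊆ T'.1 <;> by_cases h2 : U ∈ A <;> simp [h1, h2]

lemma sum_hmon (g : ↥F → ℕ) (T : ↥F) (A : Finset ↥F) (e : ℕ) :
    ∑ U : ↥F, hmon F g T A e U = (∑ U : ↥F, g U) + e + A.card := by
  unfold hmon
  simp only [Finset.sum_add_distrib]
  congr 1
  · congr 1
    rw [Finset.sum_ite_eq' Finset.univ T (fun _ => e)]
    simp
  · rw [Finset.sum_ite_mem, Finset.univ_inter]
    simp

lemma Om_hmon (g : ↥F → ℕ) (T : ↥F) (A : Finset ↥F) (e : ℕ) :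
    OmF F (hmon F g T A e) = OmF F g + e * T.1.card + ∑ U ∈ A, U.1.card := by
  unfold OmF hmon
  simp only [add_mul]
  rw [Finset.sum_add_distrib, Finset.sum_add_distrib]
  congr 1
  · congr 1
    have : ∀ U : ↥F, (if U = T then e else 0) * U.1.card = (if U = T then e * T.1.card else 0) := by
      intro U
      by_cases h : U = T <;> simp [h]
    rw [Finset.sum_congr rfl (fun U _ => this U)]
    rw [Finset.sum_ite_eq' Finset.univ T (fun _ => e * T.1.card)]
    simp
  · have : ∀ U : ↥F, (if U ∈ A then 1 else 0) * U.1.card = (if U ∈ A then U.1.card else 0) := by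
      intro U
      by_cases h : U ∈ A <;> simp [h]
    rw [Finset.sum_congr rfl (fun U _ => this U)]
    rw [Finset.sum_ite_mem]
    congr 1
    exact Finset.univ_inter A

lemma alt_sum {R : Type*} [CommRing R] (s : Finset ↥F) :
    (∑ A ∈ s.powerset, (-1 : R) ^ A.card) = if s = ∅ then 1 else 0 := by
  classical
  induction s using Finset.induction_on with
  | empty => simp
  | @insert a s ha ih =>
    rw [Finset.sum_powerset_insert ha, ih]
    have h2 : (∑ A ∈ s.powerset, (-1 : R) ^ (insert a A).card) = -∑ A ∈ s.powerset, (-1 : R) ^ A.card := by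
      rw [← Finset.sum_neg_distrib]
      apply Finset.sum_congr rfl
      intro A hA
      rw [Finset.mem_powerset] at hA
      have : a ∉ A := fun h => ha (hA h)
      rw [Finset.card_insert_of_notMem this, pow_succ]
      ring
    rw [h2, ih]
    simp [Finset.insert_ne_empty]


lemma expandE (g : ↥F → ℕ) (T : ↥F) (Us : Finset ↥F) :
    Mk F g * relJ F T Us
      = ∑ A ∈ Us.powerset, (-1 : MvPolynomial ↥F ℤ) ^ A.card
          * Mk F (hmon F g T A ((T.1.card - 1 - ∑ U ∈ Us, (U.1.card - 1)) + (Us \ A).card)) := by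
  classical
  rw [relJ]
  set m := T.1.card - 1 - ∑ U ∈ Us, (U.1.card - 1) with hm
  have hfac : ∀ U ∈ Us, (MvPolynomial.X T - MvPolynomial.X U : MvPolynomial ↥F ℤ)
      = (- MvPolynomial.X U) + MvPolynomial.X T := by intros; ring
  rw [Finset.prod_congr rfl hfac, Finset.prod_add, ← mul_assoc, Finset.mul_sum]
  apply Finset.sum_congr rfl
  intro A hA
  rw [Finset.mem_powerset] at hA
  have h1 : (∏ _U ∈ Us \ A, (MvPolynomial.X T : MvPolynomial ↥F ℤ))
      = MvPolynomial.X T ^ (Us \ A).card := Finset.prod_const _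
  have h2 : (∏ U ∈ A, (- MvPolynomial.X U : MvPolynomial ↥F ℤ))
      = (-1) ^ A.card * ∏ U ∈ A, MvPolynomial.X U := by
    rw [Finset.prod_congr rfl (fun U _ => (by ring : (- MvPolynomial.X U : MvPolynomial ↥F ℤ)
        = (-1) * MvPolynomial.X U)), Finset.prod_mul_distrib, Finset.prod_const]
  rw [h1, h2, Mk_hmon]
  ring

def phi : MvPolynomial ↥F ℤ →ₗ[ℤ] ℤ :=
  Finsupp.lsum ℤ (fun h : ↥F →₀ ℕ =>
    if NpF F ⇑h then (LinearMap.id : ℤ →ₗ[ℤ] ℤ) else 0) ∘ₗ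
    (AddMonoidAlgebra.coeffLinearEquiv ℤ).toLinearMap

lemma phi_monomial (h : ↥F →₀ ℕ) (c : ℤ) :
    phi F (MvPolynomial.monomial h c) = if NpF F ⇑h then c else 0 := by
  rw [phi, LinearMap.comp_apply]
  erw [show (AddMonoidAlgebra.coeffLinearEquiv ℤ) (MvPolynomial.monomial h c)
    = Finsupp.single h c from rfl]
  erw [Finsupp.lsum_single]
  by_cases hh : NpF F ⇑h <;> simp [hh]

lemma phi_Mk (k : ↥F → ℕ) : phi F (Mk F k) = if NpF F k then 1 else 0 := by
  rw [Mk, phi_monomial]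
  simp only [coe_toFs]
  rfl

section Forest

variable {S : Finset α} {F} (hF : IsForest S F)
include hF

lemma two_le_card (U : ↥F) : 2 ≤ U.1.card := hF.2.1 _ U.2

lemma forest_cases (U T : ↥F) : U.1 ⊆ T.1 ∨ T.1 ⊆ U.1 ∨ U.1 ∩ T.1 = ∅ :=
  hF.2.2 _ U.2 _ T.2

omit hF in
lemma exists_max_above (s : Finset ↥F) (U : ↥F) (hU : U ∈ s) :
    ∃ V ∈ s, U.1 ⊆ V.1 ∧ ∀ W ∈ s, ¬ V.1 ⊂ W.1 := by
  classical
  obtain ⟨V, hV, hmax⟩ := Finset.exists_max_image (s.filter (fun W => U.1 ⊆ W.1))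
    (fun W => W.1.card) ⟨U, by simp [hU]⟩
  rw [Finset.mem_filter] at hV
  refine ⟨V, hV.1, hV.2, fun W hW hVW => ?_⟩
  have hUW : U.1 ⊆ W.1 := hV.2.trans hVW.subset
  have := hmax W (Finset.mem_filter.2 ⟨hW, hUW⟩)
  exact absurd (Finset.card_lt_card hVW) (by omega)

lemma maxfilter_disj (s : Finset ↥F) {V1 V2 : ↥F}
    (h1 : V1 ∈ s ∧ ∀ W ∈ s, ¬ V1.1 ⊂ W.1) (h2 : V2 ∈ s ∧ ∀ W ∈ s, ¬ V2.1 ⊂ W.1)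
    (hne : V1 ≠ V2) : V1.1 ∩ V2.1 = ∅ := by
  rcases forest_cases hF V1 V2 with h | h | h
  · rcases h.eq_or_ssubset with he | hs
    · exact absurd (Subtype.ext he) hne
    · exact absurd hs (h1.2 V2 h2.1)
  · rcases h.eq_or_ssubset with he | hs
    · exact absurd (Subtype.ext he.symm) hne
    · exact absurd hs (h2.2 V1 h1.1)
  · exact h

lemma filters_pairwise_disj (𝒮 : Finset ↥F)
    (hd : ∀ V1 ∈ 𝒮, ∀ V2 ∈ 𝒮, V1 ≠ V2 → V1.1 ∩ V2.1 = ∅) :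
    (↑𝒮 : Set ↥F).PairwiseDisjoint
      (fun V : ↥F => Finset.univ.filter (fun U : ↥F => U.1 ⊆ V.1)) := by
  intro V1 h1 V2 h2 hne
  simp only [Function.onFun]
  rw [Finset.disjoint_left]
  intro U hU1 hU2
  rw [Finset.mem_filter] at hU1 hU2
  have h0 : U.1 ⊆ V1.1 ∩ V2.1 := Finset.subset_inter hU1.2 hU2.2
  rw [hd V1 h1 V2 h2 hne] at h0
  have := two_le_card hF U
  have := Finset.card_le_card h0
  simp_all

lemma deg_sum_le (𝒮 : Finset ↥F) (T : ↥F) (k : ↥F → ℕ)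
    (hd : ∀ V1 ∈ 𝒮, ∀ V2 ∈ 𝒮, V1 ≠ V2 → V1.1 ∩ V2.1 = ∅)
    (hs : ∀ V ∈ 𝒮, V.1 ⊆ T.1) :
    ∑ V ∈ 𝒮, degF F V k ≤ degF F T k := by
  classical
  rw [show (∑ V ∈ 𝒮, degF F V k)
      = ∑ U ∈ 𝒮.biUnion (fun V => Finset.univ.filter (fun U : ↥F => U.1 ⊆ V.1)), k U from
    (Finset.sum_biUnion (filters_pairwise_disj hF 𝒮 hd)).symm]
  apply Finset.sum_le_sum_of_subset
  intro U hU
  rw [Finset.mem_biUnion] at hU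
  obtain ⟨V, hV, hUV⟩ := hU
  rw [Finset.mem_filter] at hUV ⊢
  exact ⟨Finset.mem_univ U, hUV.2.trans (hs V hV)⟩

lemma sum_card_le (𝒮 : Finset ↥F) (T : ↥F)
    (hd : ∀ V1 ∈ 𝒮, ∀ V2 ∈ 𝒮, V1 ≠ V2 → V1.1 ∩ V2.1 = ∅)
    (hs : ∀ V ∈ 𝒮, V.1 ⊆ T.1) :
    ∑ V ∈ 𝒮, V.1.card ≤ T.1.card := by
  classical
  rw [show (∑ V ∈ 𝒮, V.1.card) = (𝒮.biUnion (fun V : ↥F => V.1)).card from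
    (Finset.card_biUnion (fun V1 h1 V2 h2 hne =>
      Finset.disjoint_iff_inter_eq_empty.2 (hd V1 h1 V2 h2 hne))).symm]
  apply Finset.card_le_card
  intro a ha
  rw [Finset.mem_biUnion] at ha
  obtain ⟨V, hV, haV⟩ := ha
  exact hs V hV haV

lemma sum_w_le (T : ↥F) (Us : Finset ↥F)
    (hUs1 : ∀ U ∈ Us, U.1 ⊆ T.1)
    (hd : ∀ V1 ∈ Us, ∀ V2 ∈ Us, V1 ≠ V2 → V1.1 ∩ V2.1 = ∅) :
    (∑ U ∈ Us, (U.1.card - 1)) ≤ T.1.card - 1 := by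
  rcases Us.eq_empty_or_nonempty with he | hne
  · subst he; simp
  · have hsum : ∑ U ∈ Us, U.1.card ≤ T.1.card :=
      sum_card_le hF Us T hd hUs1
    have h1 : (∑ U ∈ Us, (U.1.card - 1)) + Us.card = ∑ U ∈ Us, U.1.card := by
      rw [Finset.card_eq_sum_ones, ← Finset.sum_add_distrib]
      apply Finset.sum_congr rfl
      intro U hU
      have := two_le_card hF U
      omega
    have h2 : 1 ≤ Us.card := Finset.card_pos.2 hne
    omega

lemma mexp_add (T : ↥F) (Us : Finset ↥F)
    (hUs1 : ∀ U ∈ Us, U.1 ⊆ T.1)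
    (hd : ∀ V1 ∈ Us, ∀ V2 ∈ Us, V1 ≠ V2 → V1.1 ∩ V2.1 = ∅) :
    (T.1.card - 1 - ∑ U ∈ Us, (U.1.card - 1)) + (∑ U ∈ Us, (U.1.card - 1))
      = T.1.card - 1 :=
  Nat.sub_add_cancel (sum_w_le hF T Us hUs1 hd)

variable (F) in
def suppBelow (T : ↥F) (k : ↥F → ℕ) : Finset ↥F :=
  Finset.univ.filter (fun U : ↥F => U.1 ⊂ T.1 ∧ 1 ≤ k U)

variable (F) in
def maxSupp (T : ↥F) (k : ↥F → ℕ) : Finset ↥F :=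
  (suppBelow F T k).filter (fun U => ∀ V ∈ suppBelow F T k, ¬ U.1 ⊂ V.1)

omit hF in
lemma maxSupp_ssub {T : ↥F} {k : ↥F → ℕ} {V : ↥F} (h : V ∈ maxSupp F T k) :
    V.1 ⊂ T.1 := by
  simp only [maxSupp, suppBelow, Finset.mem_filter, Finset.mem_univ, true_and] at h
  exact h.1.1

omit hF in
lemma maxSupp_pos {T : ↥F} {k : ↥F → ℕ} {V : ↥F} (h : V ∈ maxSupp F T k) :
    1 ≤ k V := by
  simp only [maxSupp, suppBelow, Finset.mem_filter, Finset.mem_univ, true_and] at h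
  exact h.1.2

omit hF in
lemma maxSupp_cover {T : ↥F} {k : ↥F → ℕ} {U : ↥F} (hU : U.1 ⊂ T.1) (hk : 1 ≤ k U) :
    ∃ V ∈ maxSupp F T k, U.1 ⊆ V.1 := by
  have hUmem : U ∈ suppBelow F T k := Finset.mem_filter.2 ⟨Finset.mem_univ _, hU, hk⟩
  obtain ⟨V, hV, hsub, hmax⟩ := exists_max_above (suppBelow F T k) U hUmem
  refine ⟨V, ?_, hsub⟩
  rw [maxSupp, Finset.mem_filter]
  exact ⟨hV, hmax⟩

lemma maxSupp_disj {T : ↥F} {k : ↥F → ℕ} :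
    ∀ V1 ∈ maxSupp F T k, ∀ V2 ∈ maxSupp F T k, V1 ≠ V2 → V1.1 ∩ V2.1 = ∅ := by
  intro V1 h1 V2 h2 hne
  simp only [maxSupp, Finset.mem_filter] at h1 h2
  exact maxfilter_disj hF (suppBelow F T k) h1 h2 hne

lemma deg_split (T : ↥F) (k : ↥F → ℕ) :
    degF F T k = k T + ∑ V ∈ maxSupp F T k, degF F V k := by
  classical
  have hTmem : T ∈ Finset.univ.filter (fun U : ↥F => U.1 ⊆ T.1) := by simp
  rw [degF, ← Finset.add_sum_erase _ _ hTmem]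
  congr 1
  have herase : (Finset.univ.filter (fun U : ↥F => U.1 ⊆ T.1)).erase T
      = Finset.univ.filter (fun U : ↥F => U.1 ⊂ T.1) := by
    ext U
    simp only [Finset.mem_erase, Finset.mem_filter, Finset.mem_univ, true_and]
    constructor
    · rintro ⟨hne, hsub⟩
      exact lt_of_le_of_ne hsub (fun h => hne (Subtype.ext h))
    · intro h
      exact ⟨fun he => (by rw [he] at h; exact h.false), h.subset⟩
  rw [herase]
  rw [show (∑ V ∈ maxSupp F T k, degF F V k)
      = ∑ U ∈ (maxSupp F T k).biUnion
          (fun V => Finset.univ.filter (fun U : ↥F => U.1 ⊆ V.1)), k U from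
    (Finset.sum_biUnion (filters_pairwise_disj hF _ (maxSupp_disj hF))).symm]
  symm
  apply Finset.sum_subset
  · intro U hU
    rw [Finset.mem_biUnion] at hU
    obtain ⟨V, hV, hUV⟩ := hU
    rw [Finset.mem_filter] at hUV ⊢
    exact ⟨Finset.mem_univ U, lt_of_le_of_lt hUV.2 (maxSupp_ssub hV)⟩
  · intro U hU hnotin
    by_contra hk
    have hk1 : 1 ≤ k U := by omega
    rw [Finset.mem_filter] at hU
    obtain ⟨V, hV, hsub⟩ := maxSupp_cover (k := k) hU.2 hk1
    exact hnotin (Finset.mem_biUnion.2 ⟨V, hV, Finset.mem_filter.2 ⟨Finset.mem_univ _, hsub⟩⟩)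

lemma partA : ∀ (N : ℕ) (k : ↥F → ℕ), OmF F k ≤ N →
    (∃ T : ↥F, ¬ (degF F T k ≤ T.1.card - 2)) → Mk F k ∈ idealJ F := by
  intro N
  induction N with
  | zero =>
    intro k hOm hviol
    exfalso
    obtain ⟨T, hT⟩ := hviol
    apply hT
    have hk0 : ∀ U : ↥F, k U = 0 := by
      intro U
      have hz : ∀ U ∈ Finset.univ, k U * U.1.card = 0 :=
        Finset.sum_eq_zero_iff.1 (Nat.le_zero.1 hOm)
      have h2 := two_le_card hF U
      rcases Nat.mul_eq_zero.1 (hz U (Finset.mem_univ U)) with h | h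
      · exact h
      · omega
    have : degF F T k = 0 := Finset.sum_eq_zero (fun U _ => hk0 U)
    omega
  | succ N ih =>
    intro k hOm hviol
    classical
    obtain ⟨T0, hT0⟩ := hviol
    set viol := Finset.univ.filter (fun T : ↥F => ¬ (degF F T k ≤ T.1.card - 2)) with hviolset
    obtain ⟨T, hTmem, hTmin⟩ := Finset.exists_min_image viol (fun T => T.1.card)
      ⟨T0, by simp only [hviolset, Finset.mem_filter, Finset.mem_univ, true_and]; omega⟩
    have hTviol : ¬ (degF F T k ≤ T.1.card - 2) := (Finset.mem_filter.1 hTmem).2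
    have hmin : ∀ U : ↥F, U.1 ⊂ T.1 → degF F U k ≤ U.1.card - 2 := by
      intro U hU
      by_contra h
      have hUmem : U ∈ viol := by
        simp only [hviolset, Finset.mem_filter, Finset.mem_univ, true_and]
        omega
      have := hTmin U hUmem
      have := Finset.card_lt_card hU
      omega
    set Vs := maxSupp F T k with hVsdef
    have hVs1 : ∀ U ∈ Vs, U.1 ⊂ T.1 := fun U hU => maxSupp_ssub hU
    have hVs2 : ∀ V1 ∈ Vs, ∀ V2 ∈ Vs, V1 ≠ V2 → V1.1 ∩ V2.1 = ∅ := maxSupp_disj hF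
    set W := ∑ U ∈ Vs, (U.1.card - 1) with hW
    set mE := T.1.card - 1 - W with hmE
    have hmadd : mE + W = T.1.card - 1 :=
      mexp_add hF T Vs (fun U hU => (hVs1 U hU).subset) hVs2
    have hsplit : degF F T k = k T + ∑ V ∈ Vs, degF F V k := deg_split hF T k
    have hB1 : (∑ V ∈ Vs, degF F V k) + Vs.card ≤ W := by
      rw [hW, Finset.card_eq_sum_ones, ← Finset.sum_add_distrib]
      apply Finset.sum_le_sum
      intro V hV
      have h2 := two_le_card hF V
      have := hmin V (maxSupp_ssub hV)
      omega
    have hcT := two_le_card hF T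
    have hkT : mE + Vs.card ≤ k T := by omega
    set g : ↥F → ℕ := fun W' => if W' = T then k T - (mE + Vs.card) else k W' with hg
    have hkeq : k = hmon F g T ∅ (mE + (Vs \ ∅).card) := by
      funext W'
      simp only [hmon, Finset.sdiff_empty, Finset.notMem_empty, if_false]
      by_cases hW' : W' = T
      · subst hW'
        simp only [hg, if_pos rfl, if_true]
        omega
      · simp [hg, hW']
    have hrel : Mk F g * relJ F T Vs ∈ idealJ F :=
      Ideal.mul_mem_left _ _ (Ideal.subset_span ⟨T, Vs, hVs1, hVs2, rfl⟩)
    have hmE' : mE = T.1.card - 1 - ∑ U ∈ Vs, (U.1.card - 1) := by rw [hmE, hW]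
    have hsplit2 : Mk F g * relJ F T Vs
        = (-1 : MvPolynomial ↥F ℤ) ^ (∅ : Finset ↥F).card
            * Mk F (hmon F g T ∅ (mE + (Vs \ ∅).card))
          + ∑ A ∈ Vs.powerset.erase ∅,
              (-1 : MvPolynomial ↥F ℤ) ^ A.card * Mk F (hmon F g T A (mE + (Vs \ A).card)) := by
      rw [expandE F g T Vs, ← hmE']
      exact (Finset.add_sum_erase _ _ (Finset.empty_mem_powerset Vs)).symm
    have hMkk : Mk F g * relJ F T Vs
        - ∑ A ∈ Vs.powerset.erase ∅,
            (-1 : MvPolynomial ↥F ℤ) ^ A.card * Mk F (hmon F g T A (mE + (Vs \ A).card))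
        = Mk F k := by
      rw [hsplit2, Finset.card_empty, pow_zero, one_mul, ← hkeq]
      ring
    rw [← hMkk]
    apply Ideal.sub_mem _ hrel
    apply Ideal.sum_mem
    intro A hA
    rw [Finset.mem_erase, Finset.mem_powerset] at hA
    obtain ⟨hAne, hAsub⟩ := hA
    apply Ideal.mul_mem_left
    have hcardA : A.card + (Vs \ A).card = Vs.card := by
      rw [Finset.card_sdiff_of_subset hAsub]
      have := Finset.card_le_card hAsub
      omega
    apply ih
    · -- decreasing weighted degree
      have h1 := Om_hmon F g T A (mE + (Vs \ A).card)
      have h0 : OmF F k = OmF F g + (mE + Vs.card) * T.1.card := by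
        rw [hkeq, Om_hmon]
        simp
      have hsumA : ∑ U ∈ A, U.1.card < A.card * T.1.card := by
        have := Finset.sum_lt_sum_of_nonempty (Finset.nonempty_of_ne_empty hAne)
          (f := fun U : ↥F => U.1.card) (g := fun _ : ↥F => T.1.card)
          (fun U hU => Finset.card_lt_card (hVs1 U (hAsub hU)))
        simpa [Finset.sum_const, mul_comm] using this
      have hexpand1 : (mE + (Vs \ A).card) * T.1.card
          = mE * T.1.card + (Vs \ A).card * T.1.card := by rw [Nat.add_mul]
      have hexpand2 : (mE + Vs.card) * T.1.card
          = mE * T.1.card + (Vs \ A).card * T.1.card + A.card * T.1.card := by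
        rw [show Vs.card = (Vs \ A).card + A.card from by omega]
        ring
      rw [h1, hexpand1]
      rw [h0, hexpand2] at hOm
      omega
    · refine ⟨T, ?_⟩
      have hd1 : degF F T (hmon F g T A (mE + (Vs \ A).card))
          = degF F T g + (mE + (Vs \ A).card) + A.card := by
        rw [deg_hmon, if_pos (Finset.Subset.refl T.1)]
        rw [Finset.filter_true_of_mem (fun U hU => (hVs1 U (hAsub hU)).subset)]
      have hd0 : degF F T k = degF F T g + (mE + Vs.card) := by
        conv_lhs => rw [hkeq]
        rw [deg_hmon, if_pos (Finset.Subset.refl T.1)]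
        simp
      rw [hd1]
      intro hcon
      apply hTviol
      omega


lemma sumD (g : ↥F → ℕ) (T : ↥F) (Us : Finset ↥F)
    (hUs1 : ∀ U ∈ Us, U.1 ⊂ T.1)
    (hUs2 : ∀ V1 ∈ Us, ∀ V2 ∈ Us, V1 ≠ V2 → V1.1 ∩ V2.1 = ∅) :
    (∑ A ∈ Us.powerset, (-1 : ℤ) ^ A.card *
      (if NpF F (hmon F g T A
          ((T.1.card - 1 - ∑ U ∈ Us, (U.1.card - 1)) + (Us \ A).card)) then 1 else 0)) = 0 := by
  classical
  set W := ∑ U ∈ Us, (U.1.card - 1) with hW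
  set mE := T.1.card - 1 - W with hmE
  have hcT := two_le_card hF T
  have hmadd : mE + W = T.1.card - 1 :=
    mexp_add hF T Us (fun U hU => (hUs1 U hU).subset) hUs2
  by_cases hC : degF F T g + (mE + Us.card) ≤ T.1.card - 2
  case neg =>
    -- every monomial violates the bound at T
    apply Finset.sum_eq_zero
    intro A hA
    rw [Finset.mem_powerset] at hA
    have hNp : ¬ NpF F (hmon F g T A (mE + (Us \ A).card)) := by
      intro hNp
      apply hC
      have hT := hNp T
      rw [deg_hmon, if_pos (Finset.Subset.refl T.1),
        Finset.filter_true_of_mem (fun U hU => (hUs1 U (hA hU)).subset)] at hT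
      have hc1 : A.card ≤ Us.card := Finset.card_le_card hA
      have hc2 : (Us \ A).card = Us.card - A.card := Finset.card_sdiff_of_subset hA
      omega
    rw [if_neg hNp, mul_zero]
  case pos =>
    have hUsne : Us.Nonempty := by
      rcases Us.eq_empty_or_nonempty with he | hne
      · exfalso
        rw [he] at hW
        simp only [Finset.sum_empty] at hW
        rw [he] at hC
        simp only [Finset.card_empty] at hC
        omega
      · exact hne
    have hsharp : degF F T g + Us.card + 1 ≤ W := by omega
    by_cases hfree : ∃ U0 ∈ Us, ∀ T' : ↥F, U0.1 ⊆ T'.1 → T'.1 ⊂ T.1 →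
        degF F T' g + (Us.filter (fun U => U.1 ⊆ T'.1)).card ≤ T'.1.card - 2
    case pos =>
      obtain ⟨U0, hU0, hfr⟩ := hfree
      have hU0T := hUs1 U0 hU0
      have hUsrw : Us = insert U0 (Us.erase U0) := (Finset.insert_erase hU0).symm
      rw [show Us.powerset = (insert U0 (Us.erase U0)).powerset from by rw [← hUsrw]]
      rw [Finset.sum_powerset_insert (Finset.notMem_erase U0 Us)]
      rw [← Finset.sum_add_distrib]
      apply Finset.sum_eq_zero
      intro A hA
      rw [Finset.mem_powerset] at hA
      have hU0A : U0 ∉ A := fun h => Finset.notMem_erase U0 Us (hA h)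
      have hAUs : A ⊆ Us := hA.trans (Finset.erase_subset U0 Us)
      have hA'Us : insert U0 A ⊆ Us := Finset.insert_subset hU0 hAUs
      have hcardins : (insert U0 A).card = A.card + 1 := Finset.card_insert_of_notMem hU0A
      have hsd : (Us \ insert U0 A).card + 1 = (Us \ A).card := by
        have h1 := Finset.card_sdiff_of_subset hAUs
        have h2 := Finset.card_sdiff_of_subset hA'Us
        have h3 := Finset.card_le_card hA'Us
        omega
      -- the two indicator values agree
      have hiff : NpF F (hmon F g T (insert U0 A) (mE + (Us \ insert U0 A).card))
          ↔ NpF F (hmon F g T A (mE + (Us \ A).card)) := by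
        have hcond : ∀ T' : ↥F,
            (degF F T' (hmon F g T (insert U0 A) (mE + (Us \ insert U0 A).card))
              ≤ T'.1.card - 2)
            ↔ (degF F T' (hmon F g T A (mE + (Us \ A).card)) ≤ T'.1.card - 2) := by
          intro T'
          by_cases hTT' : T.1 ⊆ T'.1
          · rw [deg_hmon, deg_hmon, if_pos hTT', if_pos hTT',
              Finset.filter_true_of_mem
                (fun U hU => ((hUs1 U (hA'Us hU)).subset.trans hTT')),
              Finset.filter_true_of_mem
                (fun U hU => ((hUs1 U (hAUs hU)).subset.trans hTT'))]
            rw [hcardins]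
            constructor <;> intro <;> omega
          · by_cases hU0T' : U0.1 ⊆ T'.1
            · have hT'T : T'.1 ⊂ T.1 := by
                rcases forest_cases hF T' T with h | h | h
                · rcases h.eq_or_ssubset with he | hs
                  · exact absurd (he ▸ Finset.Subset.refl T'.1) hTT'
                  · exact hs
                · exact absurd h hTT'
                · exfalso
                  have h0 : U0.1 ⊆ T'.1 ∩ T.1 :=
                    Finset.subset_inter hU0T' (hUs1 U0 hU0).subset
                  rw [h] at h0
                  have hcard := Finset.card_le_card h0
                  rw [Finset.card_empty] at hcard
                  have := two_le_card hF U0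
                  omega
              have hbound := hfr T' hU0T' hT'T
              constructor <;> intro _ <;>
                rw [deg_hmon, if_neg hTT'] <;>
                [ (have hcc : (A.filter (fun U => U.1 ⊆ T'.1)).card
                      ≤ (Us.filter (fun U => U.1 ⊆ T'.1)).card :=
                    Finset.card_le_card (Finset.filter_subset_filter _ hAUs));
                  (have hcc : ((insert U0 A).filter (fun U => U.1 ⊆ T'.1)).card
                      ≤ (Us.filter (fun U => U.1 ⊆ T'.1)).card :=
                    Finset.card_le_card (Finset.filter_subset_filter _ hA'Us))] <;>
                omega
            · rw [deg_hmon, deg_hmon, if_neg hTT', if_neg hTT',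
                Finset.filter_insert, if_neg hU0T']
        exact ⟨fun h T' => (hcond T').1 (h T'), fun h T' => (hcond T').2 (h T')⟩
      rw [hcardins]
      by_cases hNp : NpF F (hmon F g T A (mE + (Us \ A).card))
      · rw [if_pos hNp, if_pos (hiff.2 hNp), pow_succ]
        ring
      · rw [if_neg hNp, if_neg (fun h => hNp (hiff.1 h))]
        ring
    case neg =>
      exfalso
      push_neg at hfree
      set TT0 := Finset.univ.filter (fun V : ↥F => V.1 ⊂ T.1 ∧
        V.1.card - 1 ≤ degF F V g + (Us.filter (fun U => U.1 ⊆ V.1)).card ∧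
        ∃ U ∈ Us, U.1 ⊆ V.1) with hTT0
      set TT := TT0.filter (fun V => ∀ W ∈ TT0, ¬ V.1 ⊂ W.1) with hTT
      have hcover : ∀ U ∈ Us, ∃ V ∈ TT, U.1 ⊆ V.1 := by
        intro U hU
        obtain ⟨T', hsub, hT'T, hbl⟩ := hfree U hU
        have hT'cd := two_le_card hF T'
        have hT'mem : T' ∈ TT0 := by
          simp only [hTT0, Finset.mem_filter, Finset.mem_univ, true_and]
          exact ⟨hT'T, by omega, ⟨U, hU, hsub⟩⟩
        obtain ⟨V, hV, hsubV, hmax⟩ := exists_max_above TT0 T' hT'mem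
        refine ⟨V, ?_, hsub.trans hsubV⟩
        rw [hTT, Finset.mem_filter]
        exact ⟨hV, hmax⟩
      have hTTdisj : ∀ V1 ∈ TT, ∀ V2 ∈ TT, V1 ≠ V2 → V1.1 ∩ V2.1 = ∅ := by
        intro V1 h1 V2 h2 hne
        rw [hTT, Finset.mem_filter] at h1 h2
        exact maxfilter_disj hF TT0 h1 h2 hne
      have hTTsub : ∀ V ∈ TT, V.1 ⊆ T.1 := by
        intro V hV
        rw [hTT, Finset.mem_filter, hTT0, Finset.mem_filter] at hV
        exact hV.1.2.1.subset
      -- per-element estimate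
      have hkey : ∀ V ∈ TT, (∑ U ∈ Us.filter (fun U => U.1 ⊆ V.1), (U.1.card - 2))
          ≤ degF F V g := by
        intro V hV
        rw [hTT, Finset.mem_filter, hTT0, Finset.mem_filter] at hV
        obtain ⟨⟨_, _, hbl, U1, hU1, hU1V⟩, _⟩ := hV
        set P := Us.filter (fun U => U.1 ⊆ V.1) with hP
        have hPne : P.Nonempty := ⟨U1, Finset.mem_filter.2 ⟨hU1, hU1V⟩⟩
        have hP1 : ∀ U ∈ P, U.1 ⊆ V.1 := fun U hU => (Finset.mem_filter.1 hU).2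
        have hP2 : ∀ V1 ∈ P, ∀ V2 ∈ P, V1 ≠ V2 → V1.1 ∩ V2.1 = ∅ :=
          fun V1 h1 V2 h2 hne =>
            hUs2 V1 (Finset.filter_subset _ _ h1) V2 (Finset.filter_subset _ _ h2) hne
        have hsum1 : (∑ U ∈ P, (U.1.card - 1)) ≤ V.1.card - 1 :=
          sum_w_le hF V P hP1 hP2
        have hsum2 : (∑ U ∈ P, (U.1.card - 2)) + P.card = ∑ U ∈ P, (U.1.card - 1) := by
          rw [Finset.card_eq_sum_ones, ← Finset.sum_add_distrib]
          apply Finset.sum_congr rfl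
          intro U hU
          have := two_le_card hF U
          omega
        have hPc : 1 ≤ P.card := Finset.card_pos.2 hPne
        have hVc := two_le_card hF V
        omega
      -- sum the estimates
      have hdisjP : (↑TT : Set ↥F).PairwiseDisjoint
          (fun V : ↥F => Us.filter (fun U => U.1 ⊆ V.1)) := by
        intro V1 h1 V2 h2 hne
        simp only [Function.onFun]
        rw [Finset.disjoint_left]
        intro U hme1 hme2
        rw [Finset.mem_filter] at hme1 hme2
        have h0 : U.1 ⊆ V1.1 ∩ V2.1 := Finset.subset_inter hme1.2 hme2.2
        rw [hTTdisj V1 h1 V2 h2 hne] at h0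
        have hcard := Finset.card_le_card h0
        rw [Finset.card_empty] at hcard
        have := two_le_card hF U
        omega
      have hS1 : (∑ U ∈ Us, (U.1.card - 2))
          ≤ ∑ V ∈ TT, ∑ U ∈ Us.filter (fun U => U.1 ⊆ V.1), (U.1.card - 2) := by
        rw [← Finset.sum_biUnion hdisjP]
        apply Finset.sum_le_sum_of_subset
        intro U hU
        obtain ⟨V, hV, hUV⟩ := hcover U hU
        exact Finset.mem_biUnion.2 ⟨V, hV, Finset.mem_filter.2 ⟨hU, hUV⟩⟩
      have hS2 : (∑ V ∈ TT, ∑ U ∈ Us.filter (fun U => U.1 ⊆ V.1), (U.1.card - 2))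
          ≤ ∑ V ∈ TT, degF F V g := Finset.sum_le_sum hkey
      have hS3 : (∑ V ∈ TT, degF F V g) ≤ degF F T g :=
        deg_sum_le hF TT T g hTTdisj hTTsub
      have hW2 : (∑ U ∈ Us, (U.1.card - 2)) + Us.card = W := by
        rw [hW, Finset.card_eq_sum_ones, ← Finset.sum_add_distrib]
        apply Finset.sum_congr rfl
        intro U hU
        have := two_le_card hF U
        omega
      omega

lemma phi_mul_relJ (p : MvPolynomial ↥F ℤ) (T : ↥F) (Us : Finset ↥F)
    (hUs1 : ∀ U ∈ Us, U.1 ⊂ T.1)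
    (hUs2 : ∀ V1 ∈ Us, ∀ V2 ∈ Us, V1 ≠ V2 → V1.1 ∩ V2.1 = ∅) :
    phi F (p * relJ F T Us) = 0 := by
  classical
  induction p using MvPolynomial.induction_on' with
  | monomial v c =>
    have htv : toFs F ⇑v = v := Finsupp.ext (fun a => rfl)
    have hvc : (MvPolynomial.monomial v c : MvPolynomial ↥F ℤ)
        = MvPolynomial.C c * Mk F ⇑v := by
      rw [Mk, htv, MvPolynomial.C_mul_monomial, mul_one]
    rw [hvc, mul_assoc, MvPolynomial.C_mul', map_smul, smul_eq_mul]
    rw [expandE F ⇑v T Us, map_sum]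
    have hterm : ∀ A ∈ Us.powerset,
        phi F ((-1 : MvPolynomial ↥F ℤ) ^ A.card
          * Mk F (hmon F (⇑v) T A
            ((T.1.card - 1 - ∑ U ∈ Us, (U.1.card - 1)) + (Us \ A).card)))
        = (-1 : ℤ) ^ A.card * (if NpF F (hmon F (⇑v) T A
            ((T.1.card - 1 - ∑ U ∈ Us, (U.1.card - 1)) + (Us \ A).card)) then 1 else 0) := by
      intro A hA
      rw [show ((-1 : MvPolynomial ↥F ℤ) ^ A.card)
          = MvPolynomial.C ((-1 : ℤ) ^ A.card) from by rw [map_pow, map_neg, map_one]]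
      rw [MvPolynomial.C_mul', map_smul, smul_eq_mul, phi_Mk]
    rw [Finset.sum_congr rfl hterm, sumD hF (⇑v) T Us hUs1 hUs2, mul_zero]
  | add p q hp hq =>
    rw [add_mul, map_add, hp, hq, add_zero]

lemma phi_J : ∀ f ∈ idealJ F, phi F f = 0 := by
  classical
  let K : Ideal (MvPolynomial ↥F ℤ) :=
  { carrier := {f | ∀ p : MvPolynomial ↥F ℤ, phi F (p * f) = 0}
    add_mem' := fun {a b} ha hb p => by
      rw [mul_add, map_add, ha p, hb p, add_zero]
    zero_mem' := fun p => by rw [mul_zero, map_zero]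
    smul_mem' := fun c x hx p => by
      rw [smul_eq_mul, ← mul_assoc]
      exact hx (p * c) }
  have hspan : idealJ F ≤ K := by
    rw [idealJ, Ideal.span_le]
    rintro P ⟨T, Us, hUs1, hUs2, rfl⟩
    intro p
    exact phi_mul_relJ hF p T Us hUs1 hUs2
  intro f hf
  have hfK : ∀ p : MvPolynomial ↥F ℤ, phi F (p * f) = 0 := hspan hf
  have := hfK 1
  rwa [one_mul] at this

omit hF in
lemma partB_base (T : ↥F) (k : ↥F → ℕ)
    (htot : (∑ U : ↥F, k U) = T.1.card - 2) (hbase : T.1.card - 2 ≤ k T) :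
    Mk F k = MvPolynomial.X T ^ (T.1.card - 2) := by
  classical
  have h1 : k T ≤ ∑ U : ↥F, k U :=
    Finset.single_le_sum (fun _ _ => Nat.zero_le _) (Finset.mem_univ T)
  have hkT : k T = T.1.card - 2 := by omega
  have h2 : k T + ∑ U ∈ Finset.univ.erase T, k U = ∑ U : ↥F, k U :=
    Finset.add_sum_erase _ _ (Finset.mem_univ T)
  have h3 : ∀ U ∈ Finset.univ.erase T, k U = 0 := by
    rw [← Finset.sum_eq_zero_iff]
    omega
  rw [Mk_X_pow]
  congr 1
  funext U
  by_cases hU : U = T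
  · rw [hU, if_pos rfl, hkT]
  · rw [if_neg hU]
    exact h3 U (Finset.mem_erase.2 ⟨hU, Finset.mem_univ U⟩)

lemma partB (T : ↥F) : ∀ (N : ℕ) (k : ↥F → ℕ),
    NpF F k →
    (∀ U : ↥F, 1 ≤ k U → U.1 ⊆ T.1) →
    (∑ U : ↥F, k U) = T.1.card - 2 →
    T.1.card - 2 ≤ k T + N →
    Ideal.Quotient.mk (idealJ F) (Mk F k)
      = Ideal.Quotient.mk (idealJ F) (MvPolynomial.X T ^ (T.1.card - 2)) := by
  intro N
  induction N with
  | zero =>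
    intro k hNp hsupp htot hN
    rw [partB_base T k htot (by omega)]
  | succ N ih =>
    intro k hNp hsupp htot hN
    classical
    by_cases hbase : T.1.card - 2 ≤ k T
    · rw [partB_base T k htot hbase]
    have hdegT : degF F T k = ∑ U : ↥F, k U := by
      rw [degF]
      apply Finset.sum_subset (Finset.filter_subset _ _)
      intro U _ hU
      rw [Finset.mem_filter] at hU
      by_contra hk
      exact hU ⟨Finset.mem_univ U, hsupp U (by omega)⟩
    set Vs := maxSupp F T k with hVsdef
    have hVs1 : ∀ U ∈ Vs, U.1 ⊂ T.1 := fun U hU => maxSupp_ssub hU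
    have hVs2 : ∀ V1 ∈ Vs, ∀ V2 ∈ Vs, V1 ≠ V2 → V1.1 ∩ V2.1 = ∅ := maxSupp_disj hF
    have hTVs : T ∉ Vs := fun h => (hVs1 T h).false
    set W' := ∑ U ∈ Vs, (U.1.card - 1) with hW'
    set mE := T.1.card - 1 - W' with hmE
    have hcT := two_le_card hF T
    have hmadd : mE + W' = T.1.card - 1 :=
      mexp_add hF T Vs (fun U hU => (hVs1 U hU).subset) hVs2
    have hsplit : degF F T k = k T + ∑ V ∈ Vs, degF F V k := deg_split hF T k
    have hVsne : Vs.Nonempty := by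
      rcases Vs.eq_empty_or_nonempty with he | hne
      · exfalso
        rw [he, Finset.sum_empty] at hsplit
        omega
      · exact hne
    have hVsc : 1 ≤ Vs.card := Finset.card_pos.2 hVsne
    have hB1 : (∑ V ∈ Vs, degF F V k) + Vs.card ≤ W' := by
      rw [hW', Finset.card_eq_sum_ones, ← Finset.sum_add_distrib]
      apply Finset.sum_le_sum
      intro V hV
      have h2 := two_le_card hF V
      have := hNp V
      omega
    have hkTm : mE ≤ k T := by omega
    set g : ↥F → ℕ := fun W'' =>
      if W'' = T then k T - mE else if W'' ∈ Vs then k W'' - 1 else k W'' with hg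
    have hgle : ∀ U : ↥F, g U ≤ k U := by
      intro U
      rw [hg]
      dsimp only
      split_ifs with h1 h2
      · rw [h1]; omega
      · omega
      · exact le_refl _
    have hkeq : k = hmon F g T Vs (mE + (Vs \ Vs).card) := by
      funext W''
      simp only [hmon, Finset.sdiff_self, Finset.card_empty, Nat.add_zero]
      by_cases hW1 : W'' = T
      · subst hW1
        rw [if_pos rfl, if_neg hTVs, hg]
        dsimp only
        rw [if_pos rfl]
        omega
      · by_cases hW2 : W'' ∈ Vs
        · rw [if_neg hW1, if_pos hW2, hg]
          dsimp only
          rw [if_neg hW1, if_pos hW2]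
          have := maxSupp_pos hW2
          omega
        · rw [if_neg hW1, if_neg hW2, hg]
          dsimp only
          rw [if_neg hW1, if_neg hW2]
          omega
    have hmE' : mE = T.1.card - 1 - ∑ U ∈ Vs, (U.1.card - 1) := by rw [hmE, hW']
    set Q := Ideal.Quotient.mk (idealJ F) with hQ
    have h0 : Q (Mk F g * relJ F T Vs) = 0 :=
      Ideal.Quotient.eq_zero_iff_mem.2
        (Ideal.mul_mem_left _ _ (Ideal.subset_span ⟨T, Vs, hVs1, hVs2, rfl⟩))
    have hsum0 : (∑ A ∈ Vs.powerset,
        Q ((-1 : MvPolynomial ↥F ℤ) ^ A.card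
          * Mk F (hmon F g T A (mE + (Vs \ A).card)))) = 0 := by
      rw [← map_sum]
      rw [show (∑ A ∈ Vs.powerset, (-1 : MvPolynomial ↥F ℤ) ^ A.card
          * Mk F (hmon F g T A (mE + (Vs \ A).card)))
        = Mk F g * relJ F T Vs from by rw [expandE F g T Vs, ← hmE']]
      exact h0
    -- rewrite each term
    set c2 := Q (MvPolynomial.X T ^ (T.1.card - 2)) with hc2
    have hIH : ∀ A ∈ Vs.powerset.erase Vs,
        Q (Mk F (hmon F g T A (mE + (Vs \ A).card))) = c2 := by
      intro A hA
      rw [Finset.mem_erase, Finset.mem_powerset] at hA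
      obtain ⟨hAne, hAsub⟩ := hA
      have hssub : A ⊂ Vs := lt_of_le_of_ne hAsub hAne
      obtain ⟨x, hxVs, hxA⟩ := Finset.exists_of_ssubset hssub
      have hsdne : 1 ≤ (Vs \ A).card :=
        Finset.card_pos.2 ⟨x, Finset.mem_sdiff.2 ⟨hxVs, hxA⟩⟩
      have hcardA : A.card + (Vs \ A).card = Vs.card := by
        rw [Finset.card_sdiff_of_subset hAsub]
        have := Finset.card_le_card hAsub
        omega
      have hklike : ∀ T' : ↥F,
          degF F T' (hmon F g T A (mE + (Vs \ A).card)) ≤ degF F T' k := by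
        intro T'
        conv_rhs => rw [hkeq]
        rw [deg_hmon, deg_hmon]
        by_cases hTT' : T.1 ⊆ T'.1
        · rw [if_pos hTT', if_pos hTT',
            Finset.filter_true_of_mem
              (fun U hU => ((hVs1 U (hAsub hU)).subset.trans hTT')),
            Finset.filter_true_of_mem
              (fun U hU => ((hVs1 U hU).subset.trans hTT'))]
          rw [Finset.sdiff_self, Finset.card_empty]
          omega
        · rw [if_neg hTT', if_neg hTT']
          have : (A.filter (fun U => U.1 ⊆ T'.1)).card
              ≤ (Vs.filter (fun U => U.1 ⊆ T'.1)).card :=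
            Finset.card_le_card (Finset.filter_subset_filter _ hAsub)
          omega
      apply ih
      · exact fun T' => le_trans (hklike T') (hNp T')
      · intro U hU
        rw [hmon] at hU
        by_cases h1 : U = T
        · rw [h1]
        · by_cases h2 : U ∈ A
          · exact (hVs1 U (hAsub h2)).subset
          · rw [if_neg h1, if_neg h2] at hU
            have := hgle U
            exact hsupp U (by omega)
      · rw [sum_hmon]
        have hsumk : (∑ U : ↥F, k U) = (∑ U : ↥F, g U) + mE + Vs.card := by
          conv_lhs => rw [hkeq]
          rw [sum_hmon, Finset.sdiff_self, Finset.card_empty]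
          omega
        omega
      · have hmonT : hmon F g T A (mE + (Vs \ A).card) T
            = k T + (Vs \ A).card := by
          rw [hmon]
          rw [if_pos rfl, if_neg (fun h => hTVs (hAsub h)), hg]
          dsimp only
          rw [if_pos rfl]
          omega
        rw [hmonT]
        omega
    -- assemble the alternating sum identity
    have hterm : ∀ A ∈ Vs.powerset,
        Q ((-1 : MvPolynomial ↥F ℤ) ^ A.card
          * Mk F (hmon F g T A (mE + (Vs \ A).card)))
        = (-1 : MvPolynomial ↥F ℤ ⧸ idealJ F) ^ A.card
            * Q (Mk F (hmon F g T A (mE + (Vs \ A).card))) := by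
      intro A _
      rw [map_mul, map_pow, map_neg, map_one]
    rw [Finset.sum_congr rfl hterm] at hsum0
    rw [← Finset.add_sum_erase _ _ (Finset.mem_powerset_self Vs)] at hsum0
    rw [Finset.sum_congr rfl
      (fun A hA => by rw [hIH A hA])] at hsum0
    rw [← Finset.sum_mul] at hsum0
    have haltfull : (∑ A ∈ Vs.powerset,
        (-1 : MvPolynomial ↥F ℤ ⧸ idealJ F) ^ A.card) = 0 := by
      rw [alt_sum]
      rw [if_neg (Finset.nonempty_iff_ne_empty.1 hVsne)]
    have halt : (∑ A ∈ Vs.powerset.erase Vs,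
        (-1 : MvPolynomial ↥F ℤ ⧸ idealJ F) ^ A.card)
        = -(-1 : MvPolynomial ↥F ℤ ⧸ idealJ F) ^ Vs.card := by
      have := Finset.add_sum_erase Vs.powerset
        (fun A : Finset ↥F => (-1 : MvPolynomial ↥F ℤ ⧸ idealJ F) ^ A.card)
        (Finset.mem_powerset_self Vs)
      rw [haltfull] at this
      linear_combination this
    rw [← hkeq] at hsum0
    rw [halt] at hsum0
    have hu : ((-1 : MvPolynomial ↥F ℤ ⧸ idealJ F) ^ Vs.card)
        * ((-1 : MvPolynomial ↥F ℤ ⧸ idealJ F) ^ Vs.card) = 1 := by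
      rw [← mul_pow]
      norm_num
    have h5 : ((-1 : MvPolynomial ↥F ℤ ⧸ idealJ F) ^ Vs.card) * (Q (Mk F k) - c2) = 0 := by
      linear_combination hsum0
    have hfin : Q (Mk F k) - c2 = 0 := by
      calc Q (Mk F k) - c2
          = ((-1 : MvPolynomial ↥F ℤ ⧸ idealJ F) ^ Vs.card
            * (-1 : MvPolynomial ↥F ℤ ⧸ idealJ F) ^ Vs.card) * (Q (Mk F k) - c2) := by
            rw [hu, one_mul]
        _ = (-1 : MvPolynomial ↥F ℤ ⧸ idealJ F) ^ Vs.card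
            * ((-1 : MvPolynomial ↥F ℤ ⧸ idealJ F) ^ Vs.card * (Q (Mk F k) - c2)) := by
            ring
        _ = (-1 : MvPolynomial ↥F ℤ ⧸ idealJ F) ^ Vs.card * 0 := by rw [h5]
        _ = 0 := mul_zero _
    exact sub_eq_zero.1 hfin

end Forest

end Stmt16

/-- Lemma 5.4.3: for a forest `F` on `S` and a monomial `y = ∏_{T ∈ F} y_T^{n_T}`,
the image `x = q_F(y) ∈ R_F` is zero iff `y ∉ N[F]`; and if `y ∈ N[F]`, its shape
is a `T`-tree and its degree is the maximal value `|T| − 2`, then `x = x_T^{|T|−2}`. -/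
theorem stmt16 (S : Finset α) (F : Finset (Finset α)) (hF : IsForest S F)
    (n : ↥F → ℕ) :
    (Ideal.Quotient.mk (idealJ F) (∏ T : ↥F, MvPolynomial.X T ^ n T) = 0 ↔
      ¬ ∀ T : ↥F,
        (∑ U ∈ Finset.univ.filter (fun U : ↥F => U.1 ⊆ T.1), n U) ≤ T.1.card - 2) ∧
    ∀ T : ↥F,
      (∀ T' : ↥F,
        (∑ U ∈ Finset.univ.filter (fun U : ↥F => U.1 ⊆ T'.1), n U) ≤ T'.1.card - 2) →
      1 ≤ n T →
      (∀ U : ↥F, 1 ≤ n U → U.1 ⊆ T.1) →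
      (∑ U : ↥F, n U) = T.1.card - 2 →
      Ideal.Quotient.mk (idealJ F) (∏ U : ↥F, MvPolynomial.X U ^ n U)
        = Ideal.Quotient.mk (idealJ F) (MvPolynomial.X T ^ (T.1.card - 2)) := by
  classical
  constructor
  · constructor
    · intro h0 hall
      have hmem : (∏ T : ↥F, MvPolynomial.X T ^ n T) ∈ idealJ F :=
        Ideal.Quotient.eq_zero_iff_mem.1 h0
      rw [Stmt16.Mk_prod_pow] at hmem
      have hphi := Stmt16.phi_J hF _ hmem
      rw [Stmt16.phi_Mk, if_pos (show Stmt16.NpF F n from hall)] at hphi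
      exact one_ne_zero hphi
    · intro hviol
      rw [Stmt16.Mk_prod_pow, Ideal.Quotient.eq_zero_iff_mem]
      exact Stmt16.partA hF (Stmt16.OmF F n) n le_rfl (not_forall.1 hviol)
  · intro T hNp hT1 hsupp htot
    rw [Stmt16.Mk_prod_pow]
    exact Stmt16.partB hF T (T.1.card - 2) n hNp hsupp htot (by omega)

end
end

section
/- The ideals I_S and J_S of ℤ_S are equal, where J_S replaces the connected-set relations of I_S by the relations (y_{U∪V} − y_U)(y_{U∪V} − y_V) for pairs of intersecting subsets; in particular ℤ_S/I_S = ℤ_S/J_S. -/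
variable {α : Type*} [DecidableEq α]

/-- The index type of the polynomial ring `ℤ_S`: subsets of `S` of size at least 2. -/
def Idx (S : Finset α) : Type _ := {T : Finset α // T ⊆ S ∧ 2 ≤ T.card}

instance (S : Finset α) : DecidableEq (Idx S) := by
  unfold Idx; infer_instance

/-- A collection `L` of subsets is connected if its support admits no splitting
into two nonempty parts such that every member of `L` lies in one of them. -/
def IsConnectedFam (L : Finset (Finset α)) : Prop :=
  ¬ ∃ A B : Finset α, A ∪ B = L.sup id ∧ A ∩ B = ∅ ∧
      A.Nonempty ∧ B.Nonempty ∧ ∀ U ∈ L, U ⊆ A ∨ U ⊆ B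

noncomputable section

/-- The three families of generators common to `I_S` and `J_S`. -/
def commonRels (S : Finset α) : Set (MvPolynomial (Idx S) ℤ) :=
  {P | ∃ T : Idx S, T.1.card = 2 ∧ P = MvPolynomial.X T} ∪
  {P | ∃ T : Idx S, P = MvPolynomial.X T ^ (T.1.card - 1)} ∪
  {P | ∃ (T : Idx S) (Us : Finset (Idx S)), Us.Nonempty ∧
      (∀ U ∈ Us, U.1 ⊂ T.1) ∧
      (∀ U ∈ Us, ∀ V ∈ Us, U ≠ V → U.1 ∩ V.1 = ∅) ∧
      P = MvPolynomial.X T ^ (T.1.card - 1 - ∑ U ∈ Us, (U.1.card - 1)) *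
            ∏ U ∈ Us, (MvPolynomial.X T - MvPolynomial.X U)}

/-- The ideal `I_S ⊆ ℤ_S`, with the connected-set relations. -/
def idealIS (S : Finset α) : Ideal (MvPolynomial (Idx S) ℤ) :=
  Ideal.span (commonRels S ∪
    {P | ∃ (L : Finset (Idx S)) (W : Idx S), L.Nonempty ∧
      W.1 = (L.image fun U => U.1).sup id ∧
      IsConnectedFam (L.image fun U => U.1) ∧
      P = ∏ U ∈ L, (MvPolynomial.X W - MvPolynomial.X U)})

/-- The ideal `J_S ⊆ ℤ_S`, with the relations
`(y_{U∪V} − y_U)(y_{U∪V} − y_V)` for intersecting pairs. -/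
def idealJS (S : Finset α) : Ideal (MvPolynomial (Idx S) ℤ) :=
  Ideal.span (commonRels S ∪
    {P | ∃ U V W : Idx S, (U.1 ∩ V.1).Nonempty ∧ W.1 = U.1 ∪ V.1 ∧
      P = (MvPolynomial.X W - MvPolynomial.X U) *
            (MvPolynomial.X W - MvPolynomial.X V)})

lemma mem_supImage {S : Finset α} {L : Finset (Idx S)} {x : α} :
    x ∈ (L.image fun U => U.1).sup id ↔ ∃ U ∈ L, x ∈ U.1 := by
  simp [Finset.mem_sup]

/-- In a connected family with at least two members there are two distinct
intersecting members. -/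
lemma exists_intersecting_pair {S : Finset α} {L : Finset (Idx S)}
    (hL : 2 ≤ L.card) (hconn : IsConnectedFam (L.image fun U => U.1)) :
    ∃ U ∈ L, ∃ V ∈ L, U ≠ V ∧ (U.1 ∩ V.1).Nonempty := by
  by_contra h
  push_neg at h
  have hdisj : ∀ U ∈ L, ∀ V ∈ L, U ≠ V → U.1 ∩ V.1 = ∅ := by
    intro U hU V hV hne
    exact h U hU V hV hne
  obtain ⟨U₀, hU₀⟩ := Finset.card_pos.mp (show 0 < L.card by omega)
  apply hconn
  refine ⟨U₀.1, ((L.image fun U => U.1).sup id) \ U₀.1, ?_, ?_, ?_, ?_, ?_⟩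
  · apply Finset.union_sdiff_of_subset
    intro x hx
    exact mem_supImage.mpr ⟨U₀, hU₀, hx⟩
  · exact Finset.inter_sdiff_self _ _
  · exact Finset.card_pos.mp (by have := U₀.2.2; omega)
  · obtain ⟨V, hV, hVne⟩ := Finset.exists_mem_ne (show 1 < L.card by omega) U₀
    have hVcard := V.2.2
    obtain ⟨x, hx⟩ := Finset.card_pos.mp (show 0 < V.1.card by omega)
    refine ⟨x, Finset.mem_sdiff.mpr ⟨mem_supImage.mpr ⟨V, hV, hx⟩, ?_⟩⟩
    intro hxU
    have := hdisj V hV U₀ hU₀ hVne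
    have : x ∈ V.1 ∩ U₀.1 := Finset.mem_inter.mpr ⟨hx, hxU⟩
    rw [hdisj V hV U₀ hU₀ hVne] at this
    exact absurd this (Finset.notMem_empty x)
  · intro T hT
    obtain ⟨U', hU', rfl⟩ := Finset.mem_image.mp hT
    by_cases hE : U' = U₀
    · subst hE; exact Or.inl (le_refl _)
    · refine Or.inr fun x hx => Finset.mem_sdiff.mpr
        ⟨mem_supImage.mpr ⟨U', hU', hx⟩, fun hxU => ?_⟩
      have : x ∈ U'.1 ∩ U₀.1 := Finset.mem_inter.mpr ⟨hx, hxU⟩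
      rw [hdisj U' hU' U₀ hU₀ hE] at this
      exact absurd this (Finset.notMem_empty x)

lemma connProd_mem (S : Finset α) :
    ∀ n (L : Finset (Idx S)) (W : Idx S), L.card ≤ n → L.Nonempty →
    W.1 = (L.image fun U => U.1).sup id →
    IsConnectedFam (L.image fun U => U.1) →
    (∏ U ∈ L, (MvPolynomial.X W - MvPolynomial.X U) : MvPolynomial (Idx S) ℤ) ∈ idealJS S := by
  intro n
  induction n with
  | zero =>
    intro L W hc hne _ _
    exact absurd (Finset.card_pos.mpr hne) (by omega)
  | succ n ih =>
    intro L W hcard hne hW hconn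
    rcases eq_or_lt_of_le (Finset.one_le_card.mpr hne) with h1 | h2
    · -- card L = 1
      obtain ⟨U, rfl⟩ := Finset.card_eq_one.mp h1.symm
      have hWU : W = U := by
        apply Subtype.ext
        rw [hW]
        simp
      rw [Finset.prod_singleton, hWU, sub_self]
      exact (idealJS S).zero_mem
    · -- 2 ≤ card L
      obtain ⟨U, hU, V, hV, hUV, hint⟩ := exists_intersecting_pair h2 hconn
      set Wuv : Idx S := ⟨U.1 ∪ V.1, by
        constructor
        · exact Finset.union_subset U.2.1 V.2.1
        · exact le_trans U.2.2 (Finset.card_le_card Finset.subset_union_left)⟩ with hWuv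
      set E : Finset (Idx S) := (L.erase U).erase V with hE
      set L' : Finset (Idx S) := insert Wuv E with hL'
      have hVE : V ∈ L.erase U := Finset.mem_erase.mpr ⟨fun h => hUV h.symm, hV⟩
      -- support equality
      have hsup : (L'.image fun U => U.1).sup id = (L.image fun U => U.1).sup id := by
        apply Finset.ext
        intro x
        rw [mem_supImage, mem_supImage]
        constructor
        · rintro ⟨T, hT, hx⟩
          rcases Finset.mem_insert.mp hT with rfl | hT
          · rcases Finset.mem_union.mp hx with hx | hx
            · exact ⟨U, hU, hx⟩
            · exact ⟨V, hV, hx⟩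
          · exact ⟨T, Finset.mem_of_mem_erase (Finset.mem_of_mem_erase hT), hx⟩
        · rintro ⟨T, hT, hx⟩
          by_cases hTU : T = U
          · exact ⟨Wuv, Finset.mem_insert_self _ _, by
              subst hTU; exact Finset.mem_union_left _ hx⟩
          by_cases hTV : T = V
          · exact ⟨Wuv, Finset.mem_insert_self _ _, by
              subst hTV; exact Finset.mem_union_right _ hx⟩
          · exact ⟨T, Finset.mem_insert_of_mem
              (Finset.mem_erase.mpr ⟨hTV, Finset.mem_erase.mpr ⟨hTU, hT⟩⟩), hx⟩
      -- connectivity of L'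
      have hconn' : IsConnectedFam (L'.image fun U => U.1) := by
        rintro ⟨A, B, hAB, hABi, hA, hB, hm⟩
        apply hconn
        refine ⟨A, B, by rw [← hsup]; exact hAB, hABi, hA, hB, ?_⟩
        intro T hT
        obtain ⟨U', hU', rfl⟩ := Finset.mem_image.mp hT
        have hWm : Wuv.1 ⊆ A ∨ Wuv.1 ⊆ B :=
          hm Wuv.1 (Finset.mem_image.mpr ⟨Wuv, Finset.mem_insert_self _ _, rfl⟩)
        by_cases hTU : U' = U
        · subst hTU
          rcases hWm with h | h
          · exact Or.inl (le_trans Finset.subset_union_left h)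
          · exact Or.inr (le_trans Finset.subset_union_left h)
        by_cases hTV : U' = V
        · subst hTV
          rcases hWm with h | h
          · exact Or.inl (le_trans Finset.subset_union_right h)
          · exact Or.inr (le_trans Finset.subset_union_right h)
        · exact hm U'.1 (Finset.mem_image.mpr ⟨U', Finset.mem_insert_of_mem
            (Finset.mem_erase.mpr ⟨hTV, Finset.mem_erase.mpr ⟨hTU, hU'⟩⟩), rfl⟩)
      -- cardinality
      have hEcard : E.card = L.card - 2 := by
        rw [hE, Finset.card_erase_of_mem hVE, Finset.card_erase_of_mem hU]
        omega
      have hcard' : L'.card ≤ n := by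
        have := Finset.card_insert_le Wuv E
        rw [hL']
        omega
      -- induction hypothesis
      have Pmem := ih L' W hcard' ⟨Wuv, Finset.mem_insert_self _ _⟩
        (hW.trans hsup.symm) hconn'
      set a : MvPolynomial (Idx S) ℤ := MvPolynomial.X W
      set b : MvPolynomial (Idx S) ℤ := MvPolynomial.X Wuv
      set u : MvPolynomial (Idx S) ℤ := MvPolynomial.X U
      set v : MvPolynomial (Idx S) ℤ := MvPolynomial.X V
      set R : MvPolynomial (Idx S) ℤ := ∏ U' ∈ E, (a - MvPolynomial.X U') with hR
      have habR : (a - b) * R ∈ idealJS S := by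
        by_cases hmem : Wuv ∈ E
        · have heq : (∏ U' ∈ L', (a - MvPolynomial.X U')) = R := by
            rw [hL', Finset.insert_eq_self.mpr hmem, hR]
          rw [heq] at Pmem
          exact Ideal.mul_mem_left _ _ Pmem
        · have heq : (∏ U' ∈ L', (a - MvPolynomial.X U')) = (a - b) * R := by
            rw [hL', Finset.prod_insert hmem, hR]
          rw [heq] at Pmem
          exact Pmem
      have hgen : (b - u) * (b - v) ∈ idealJS S := by
        apply Ideal.subset_span
        exact Or.inr ⟨U, V, Wuv, hint, rfl, rfl⟩
      have hsplit : (∏ U' ∈ L, (a - MvPolynomial.X U')) = (a - u) * ((a - v) * R) := by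
        rw [hR, hE, ← Finset.prod_erase_mul L _ hU, ← Finset.prod_erase_mul (L.erase U) _ hVE]
        ring
      rw [hsplit]
      have hkey : (a - u) * ((a - v) * R) =
          ((b - u) * (b - v)) * R + ((a - b) * R) * (a - u) + ((a - b) * R) * (b - v) := by
        ring
      rw [hkey]
      exact add_mem (add_mem (Ideal.mul_mem_right _ _ hgen)
        (Ideal.mul_mem_right _ _ habR)) (Ideal.mul_mem_right _ _ habR)

/-- Corollary 9.6.4: `I_S = J_S`, hence `ℤ_S/I_S = ℤ_S/J_S`. -/
theorem stmt19 (S : Finset α) : idealIS S = idealJS S := by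
  apply le_antisymm
  · rw [idealIS]
    apply Ideal.span_le.mpr
    rintro P (hP | ⟨L, W, hne, hW, hconn, rfl⟩)
    · exact Ideal.subset_span (Or.inl hP)
    · exact connProd_mem S L.card L W le_rfl hne hW hconn
  · rw [idealJS]
    apply Ideal.span_le.mpr
    rintro P (hP | ⟨U, V, W, hint, hW, rfl⟩)
    · exact Ideal.subset_span (Or.inl hP)
    by_cases hUV : U = V
    · subst hUV
      have hWU : W = U := Subtype.ext (by rw [hW, Finset.union_self])
      subst hWU
      simp only [sub_self, mul_zero]
      exact (idealIS S).zero_mem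
    · apply Ideal.subset_span
      right
      refine ⟨{U, V}, W, ⟨U, by simp⟩, ?_, ?_, ?_⟩
      · rw [hW]
        simp [Finset.image_insert]
      · rintro ⟨A, B, hAB, hABi, hA, hB, hm⟩
        have hsup2 : A ∪ B = U.1 ∪ V.1 := by
          rw [hAB]; simp [Finset.image_insert]
        have hUm : U.1 ⊆ A ∨ U.1 ⊆ B := hm U.1 (by simp)
        have hVm : V.1 ⊆ A ∨ V.1 ⊆ B := hm V.1 (by simp)
        obtain ⟨x, hx⟩ := hint
        have hxU : x ∈ U.1 := (Finset.mem_inter.mp hx).1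
        have hxV : x ∈ V.1 := (Finset.mem_inter.mp hx).2
        have hxAB : ∀ y, y ∈ A → y ∈ B → False := by
          intro y hyA hyB
          have : y ∈ A ∩ B := Finset.mem_inter.mpr ⟨hyA, hyB⟩
          rw [hABi] at this
          exact absurd this (Finset.notMem_empty y)
        rcases hUm with hUm | hUm <;> rcases hVm with hVm | hVm
        · obtain ⟨y, hy⟩ := hB
          have : y ∈ U.1 ∪ V.1 := hsup2 ▸ Finset.mem_union_right A hy
          rcases Finset.mem_union.mp this with h | h
          · exact hxAB y (hUm h) hy
          · exact hxAB y (hVm h) hy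
        · exact hxAB x (hUm hxU) (hVm hxV)
        · exact hxAB x (hVm hxV) (hUm hxU)
        · obtain ⟨y, hy⟩ := hA
          have : y ∈ U.1 ∪ V.1 := hsup2 ▸ Finset.mem_union_left B hy
          rcases Finset.mem_union.mp this with h | h
          · exact hxAB y hy (hUm h)
          · exact hxAB y hy (hVm h)
      · rw [Finset.prod_pair hUV]

end
end
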